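/- Let q ≥ 2 and let X be a (q²+q+1)×(q²+q+1) real matrix with entries in {0,1} satisfying X·1 = (q+1)·1, Xᵀ·1 = (q+1)·1 and XᵀX = q·I + J (the incidence matrix of a projective plane of order q). Suppose S is a set of exactly q+2 columns such that every row of X contains at most two ones among the columns of S (a hyperoval). Then: (a) every row of X contains exactly 0 or exactly 2 ones among the columns of S; and (b) q is even. -/

import Mathlib

open Matrix

/-- If `S` is a hyperoval (a set of `q+2` vertices, no three on a common block) in a
projective plane of order `q`, then every block meets `S` in exactly `0` or `2` vertices,
and `q` is even. -/
theorem hyperoval_even (q : ℕ) (hq : 2 ≤ q)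
    (X : Matrix (Fin (q ^ 2 + q + 1)) (Fin (q ^ 2 + q + 1)) ℝ)
    (h01 : ∀ i j, X i j = 0 ∨ X i j = 1)
    (hrow : X *ᵥ 1 = ((q : ℝ) + 1) • 1)
    (hcol : Xᵀ *ᵥ 1 = ((q : ℝ) + 1) • 1)
    (hgram : Xᵀ * X = (q : ℝ) • 1 + Matrix.of fun _ _ => 1)
    (S : Finset (Fin (q ^ 2 + q + 1))) (hcard : S.card = q + 2)
    (hhyp : ∀ i, ∑ j ∈ S, X i j ≤ 2) :
    (∀ i, ∑ j ∈ S, X i j = 0 ∨ ∑ j ∈ S, X i j = 2) ∧ Even q := by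
  classical
  set r : Fin (q ^ 2 + q + 1) → ℝ := fun i => ∑ j ∈ S, X i j with hr
  have hcol' : ∀ j, ∑ i, X i j = (q : ℝ) + 1 := by
    intro j
    have h := congrFun hcol j
    simpa [Matrix.mulVec, dotProduct, Matrix.transpose_apply] using h
  have hgram' : ∀ j k, ∑ i, X i j * X i k = (q : ℝ) * (if j = k then 1 else 0) + 1 := by
    intro j k
    have h := congrFun (congrFun hgram j) k
    simpa [Matrix.mul_apply, Matrix.transpose_apply, Matrix.one_apply,
      Matrix.add_apply, Matrix.smul_apply, smul_eq_mul] using h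
  have hsum1 : ∑ i, r i = ((q : ℝ) + 1) * ((q : ℝ) + 2) := by
    rw [hr]
    beta_reduce
    refine Finset.sum_comm.trans ?_
    rw [Finset.sum_congr rfl fun j _ => hcol' j]
    rw [Finset.sum_const, hcard]
    push_cast
    ring
  have hsum2 : ∑ i, r i * r i = ((q : ℝ) + 2) * (2 * (q : ℝ) + 2) := by
    have e1 : ∀ i, r i * r i = ∑ j ∈ S, ∑ k ∈ S, X i j * X i k := by
      intro i
      rw [hr, Finset.sum_mul_sum]
    rw [Finset.sum_congr rfl fun i _ => e1 i]
    rw [Finset.sum_comm]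
    have e2 : ∀ j ∈ S, ∑ i, ∑ k ∈ S, X i j * X i k = (q : ℝ) + ((q : ℝ) + 2) := by
      intro j hj
      rw [Finset.sum_comm]
      rw [Finset.sum_congr rfl fun k _ => hgram' j k]
      rw [Finset.sum_add_distrib, ← Finset.mul_sum, Finset.sum_ite_eq S j fun _ => (1 : ℝ)]
      rw [if_pos hj, Finset.sum_const, hcard]
      push_cast
      ring
    rw [Finset.sum_congr rfl e2, Finset.sum_const, hcard]
    push_cast
    ring
  have hzero : ∑ i, r i * (2 - r i) = 0 := by
    have e : ∑ i, r i * (2 - r i) = 2 * (∑ i, r i) - ∑ i, r i * r i := by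
      rw [Finset.mul_sum, ← Finset.sum_sub_distrib]
      exact Finset.sum_congr rfl fun i _ => by ring
    rw [e, hsum1, hsum2]
    ring
  have hrnn : ∀ i, 0 ≤ r i := by
    intro i
    apply Finset.sum_nonneg
    intro j _
    rcases h01 i j with h | h <;> rw [h] <;> norm_num
  have parta : ∀ i, r i = 0 ∨ r i = 2 := by
    intro i
    have hnn : ∀ i ∈ Finset.univ, 0 ≤ r i * (2 - r i) := by
      intro i _
      have h1 := hrnn i
      have h2 := hhyp i
      nlinarith [h1, h2]
    have h := (Finset.sum_eq_zero_iff_of_nonneg hnn).mp hzero i (Finset.mem_univ i)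
    rcases mul_eq_zero.mp h with h' | h'
    · exact Or.inl h'
    · exact Or.inr (by linarith)
  refine ⟨parta, ?_⟩
  -- Part (b): pick p ∉ S and double count
  obtain ⟨p, hp⟩ : ∃ p, p ∉ S := by
    by_contra h
    push_neg at h
    have hsub : Finset.univ ⊆ S := fun x _ => h x
    have hle := Finset.card_le_card hsub
    rw [Finset.card_univ, Fintype.card_fin, hcard] at hle
    nlinarith
  have key : (q : ℝ) + 2 = ∑ i, X i p * r i := by
    have hone : ∀ s ∈ S, ∑ i, X i p * X i s = 1 := by
      intro s hs
      have hne : p ≠ s := fun h => hp (h ▸ hs)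
      have := hgram' p s
      simpa [hne] using this
    calc (q : ℝ) + 2 = ∑ _s ∈ S, (1 : ℝ) := by
          rw [Finset.sum_const, hcard]; push_cast; ring
      _ = ∑ s ∈ S, ∑ i, X i p * X i s :=
          Finset.sum_congr rfl fun s hs => (hone s hs).symm
      _ = ∑ i, ∑ s ∈ S, X i p * X i s := Finset.sum_comm
      _ = ∑ i, X i p * r i := by
          exact Finset.sum_congr rfl fun i _ => by rw [hr, Finset.mul_sum]
  have hterm : ∀ i, X i p * r i = if X i p = 1 ∧ r i = 2 then 2 else 0 := by
    intro i
    rcases h01 i p with h | h <;> rcases parta i with h2 | h2 <;>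
      simp [h, h2] <;> norm_num
  set T := Finset.univ.filter (fun i => X i p = 1 ∧ r i = 2) with hT
  have hcount : (q : ℝ) + 2 = 2 * T.card := by
    rw [key, Finset.sum_congr rfl fun i _ => hterm i, Finset.sum_ite,
      Finset.sum_const, Finset.sum_const_zero, add_zero, hT]
    push_cast
    ring
  have hnat : q + 2 = 2 * T.card := by exact_mod_cast hcount
  exact ⟨T.card - 1, by omega⟩
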